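/- For any probability distribution P on a finite vocabulary W with all P_w > 0, the Aaronson score expectation satisfies n-free bounds: 1 + (π²/6 − 1)·Ent(P) ≤ E_{Y∼μ_{1,P}}[−log(1−Y)] ≤ 1 + Ent(P), where Ent(P) = −Σ_w P_w log P_w and μ_{1,P}(Y ≤ r) = Σ_w P_w r^{1/P_w}. -/

import Mathlib

open MeasureTheory Real Set Filter

lemma hasSum_telescope {g : ℕ → ℝ} (h0 : Tendsto g atTop (nhds 0))
    (hm : ∀ n, g (n + 1) ≤ g n) :
    HasSum (fun n => g n - g (n + 1)) (g 0) := by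
  have hanti : Antitone g := antitone_nat_of_succ_le hm
  have hg0 : ∀ n, 0 ≤ g n := fun n =>
    le_of_tendsto h0 (Filter.eventually_atTop.2 ⟨n, fun m hm' => hanti hm'⟩)

  have hs : Summable (fun n => g n - g (n + 1)) := by
    apply summable_of_sum_range_le (c := g 0) (fun n => sub_nonneg.2 (hm n))
    intro n
    rw [Finset.sum_range_sub' g]
    linarith [hg0 n]
  rw [hs.hasSum_iff_tendsto_nat]
  simp only [Finset.sum_range_sub' g]
  simpa using tendsto_const_nhds.sub h0

lemma summable_inv_sq_shift {s : ℝ} (hs : 0 ≤ s) :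
    Summable (fun k : ℕ => ((s + k + 1) ^ 2)⁻¹) := by
  have h1 : Summable (fun k : ℕ => (((k : ℝ) + 1) ^ 2)⁻¹) := by
    have := (summable_nat_add_iff (f := fun n : ℕ => ((n : ℝ) ^ 2)⁻¹) 1).2
      ((Real.summable_nat_pow_inv (p := 2)).2 one_lt_two)
    simpa [add_comm] using this
  apply h1.of_nonneg_of_le (fun k => by positivity)
  intro k
  have hk : ((k : ℝ) + 1) ≤ s + k + 1 := by linarith
  have h2 : (0 : ℝ) < ((k : ℝ) + 1) ^ 2 := by positivity
  apply inv_anti₀ h2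
  nlinarith [Nat.cast_nonneg (α := ℝ) k]

lemma summable_inv_cube_shift {s : ℝ} (hs : 0 ≤ s) :
    Summable (fun k : ℕ => ((s + k + 1) ^ 3)⁻¹) := by
  apply (summable_inv_sq_shift hs).of_nonneg_of_le (fun k => by positivity)
  intro k
  have h1 : (0 : ℝ) < s + k + 1 := by positivity
  apply inv_anti₀ (by positivity)
  nlinarith

lemma basel_shift : HasSum (fun k : ℕ => (((k : ℝ) + 2) ^ 2)⁻¹) (π ^ 2 / 6 - 1) := by
  have h := hasSum_zeta_two
  have h2 : HasSum (fun n : ℕ => (1 : ℝ) / ((n + 2 : ℕ) : ℝ) ^ 2) (π ^ 2 / 6 - 1) := by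
    rw [hasSum_nat_add_iff (f := fun n : ℕ => (1 : ℝ) / (n : ℝ) ^ 2) 2]
    convert h using 1
    · rfl
    norm_num
  convert h2 using 2 with k
  push_cast
  rw [one_div]

-- FTC: integral of (s+u)⁻² over [1, t]
lemma integral_inv_sq {u t : ℝ} (hu : 0 < 1 + u) (ht : 1 ≤ t) :
    ∫ s in Set.Ioc (1:ℝ) t, ((s + u) ^ 2)⁻¹ = (1 + u)⁻¹ - (t + u)⁻¹ := by
  have hpos : ∀ x ∈ Set.uIcc (1:ℝ) t, 0 < x + u := by
    intro x hx
    rw [Set.uIcc_of_le ht] at hx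
    linarith [hx.1]
  rw [← intervalIntegral.integral_of_le ht]
  have hderiv : ∀ x ∈ Set.uIcc (1:ℝ) t,
      HasDerivAt (fun s => -(s + u)⁻¹) (((x + u) ^ 2)⁻¹) x := by
    intro x hx
    have h1 : HasDerivAt (fun s : ℝ => s + u) 1 x := (hasDerivAt_id x).add_const u
    have h2 := (h1.inv (ne_of_gt (hpos x hx))).neg
    refine h2.congr_deriv ?_
    field_simp
  have hcont : IntervalIntegrable (fun s => ((s + u) ^ 2)⁻¹) volume 1 t := by
    apply ContinuousOn.intervalIntegrable
    apply ContinuousOn.inv₀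
    · fun_prop
    · intro x hx
      exact ne_of_gt (by nlinarith [hpos x hx])
  rw [intervalIntegral.integral_eq_sub_of_hasDerivAt hderiv hcont]
  ring

lemma tendsto_inv_shift (σ : ℝ) (c : ℝ) :
    Tendsto (fun k : ℕ => (σ + k + c)⁻¹) atTop (nhds 0) := by
  apply Filter.Tendsto.inv_tendsto_atTop
  apply Filter.tendsto_atTop_add_const_right
  exact Filter.tendsto_atTop_add_const_left _ _ tendsto_natCast_atTop_atTop

lemma tsum_inv_sq_lower {σ : ℝ} (hσ : 0 < σ) :
    (σ + 1)⁻¹ ≤ ∑' k : ℕ, ((σ + k + 1) ^ 2)⁻¹ := by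
  have hpos : ∀ k : ℕ, (0:ℝ) < σ + k + 1 := fun k => by positivity
  have htel : HasSum (fun k : ℕ => (σ + k + 1)⁻¹ - (σ + (k+1) + 1)⁻¹) ((σ + 1)⁻¹) := by
    have := hasSum_telescope (g := fun k : ℕ => (σ + k + 1)⁻¹) ?_ ?_
    · convert this using 2 with k <;> push_cast <;> ring_nf
    · simpa using tendsto_inv_shift σ 1
    · intro n
      apply inv_anti₀ (hpos n)
      push_cast; linarith
  rw [← htel.tsum_eq]
  apply Summable.tsum_le_tsum _ htel.summable (summable_inv_sq_shift hσ.le)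
  intro k
  have h1 : (0:ℝ) < σ + k + 1 := hpos k
  have h2 : (0:ℝ) < σ + ((k:ℝ)+1) + 1 := by positivity
  have heq : (σ + k + 1)⁻¹ - (σ + ((k:ℝ)+1) + 1)⁻¹ = 1/((σ + k + 1) * (σ + k + 2)) := by
    rw [inv_sub_inv h1.ne' h2.ne', div_eq_div_iff (by positivity) (by positivity)]
    ring
  rw [heq, one_div]
  apply inv_anti₀ (by positivity)
  nlinarith

lemma tsum_inv_cube_upper {σ : ℝ} (hσ : 0 < σ) :
    ∑' k : ℕ, ((σ + k + 1) ^ 3)⁻¹ ≤ (1/2) * ((σ + 1/2) ^ 2)⁻¹ := by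
  have htel : HasSum (fun k : ℕ => (1/2) * ((σ + k + 1/2)^2)⁻¹ - (1/2) * ((σ + (k+1) + 1/2)^2)⁻¹)
      ((1/2) * ((σ + 1/2)^2)⁻¹) := by
    have := hasSum_telescope (g := fun k : ℕ => (1/2) * ((σ + k + 1/2)^2)⁻¹) ?_ ?_
    · convert this using 2 with k <;> push_cast <;> ring_nf
    · have h2 : Tendsto (fun k : ℕ => ((σ + k + 1/2)⁻¹)^2) atTop (nhds 0) := by
        simpa using (tendsto_inv_shift σ (1/2)).pow 2
      simp only [inv_pow] at h2
      simpa using h2.const_mul (1/2 : ℝ)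
    · intro n
      have h1 : (0:ℝ) < σ + n + 1/2 := by positivity
      apply mul_le_mul_of_nonneg_left _ (by norm_num)
      apply inv_anti₀ (by positivity)
      push_cast
      nlinarith
  rw [← htel.tsum_eq]
  apply Summable.tsum_le_tsum _ (summable_inv_cube_shift hσ.le) htel.summable
  intro k
  have h1 : (0:ℝ) < σ + k + 1/2 := by positivity
  have h3 : (0:ℝ) < σ + k + 1 := by positivity
  have heq : (1/2) * ((σ + k + 1/2)^2)⁻¹ - (1/2) * ((σ + ((k:ℝ)+1) + 1/2)^2)⁻¹
      = (σ + k + 1) / ((σ + k + 1/2)^2 * (σ + k + 3/2)^2) := by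
    have h2 : (0:ℝ) < σ + ((k:ℝ)+1) + 1/2 := by positivity
    field_simp
    ring
  rw [heq, inv_eq_one_div, div_le_div_iff₀ (by positivity) (by positivity)]
  nlinarith [sq_nonneg (σ + (k:ℝ)), sq_nonneg (σ + k + 1), h3]

lemma intervalIntegrable_dmi {u σ : ℝ} (hu : 0 ≤ u) (hσ : 1 ≤ σ) :
    IntervalIntegrable
      (fun s => ((s + u) ^ 2)⁻¹ - 2 * s * ((s + u) ^ 3)⁻¹) volume 1 σ := by
  have hpos : ∀ x ∈ Set.uIcc (1:ℝ) σ, 0 < x + u := by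
    intro x hx
    rw [Set.uIcc_of_le hσ] at hx
    linarith [hx.1]
  apply ContinuousOn.intervalIntegrable
  apply ContinuousOn.sub
  · apply ContinuousOn.inv₀ (by fun_prop)
    intro x hx
    exact ne_of_gt (pow_pos (hpos x hx) _)
  · apply ContinuousOn.mul (by fun_prop)
    apply ContinuousOn.inv₀ (by fun_prop)
    intro x hx
    exact ne_of_gt (pow_pos (hpos x hx) _)

lemma integral_deriv_mul_invsq {u σ : ℝ} (hu : 0 ≤ u) (hσ : 1 ≤ σ) :
    ∫ s in Set.Ioc (1:ℝ) σ, (((s + u) ^ 2)⁻¹ - 2 * s * ((s + u) ^ 3)⁻¹)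
      = σ * ((σ + u) ^ 2)⁻¹ - ((1 + u) ^ 2)⁻¹ := by
  have hpos : ∀ x ∈ Set.uIcc (1:ℝ) σ, 0 < x + u := by
    intro x hx
    rw [Set.uIcc_of_le hσ] at hx
    linarith [hx.1]
  rw [← intervalIntegral.integral_of_le hσ]
  have hderiv : ∀ x ∈ Set.uIcc (1:ℝ) σ,
      HasDerivAt (fun s => s * ((s + u) ^ 2)⁻¹)
        (((x + u) ^ 2)⁻¹ - 2 * x * ((x + u) ^ 3)⁻¹) x := by
    intro x hx
    have hx0 : 0 < x + u := hpos x hx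
    have h1 : HasDerivAt (fun s : ℝ => s + u) 1 x := (hasDerivAt_id x).add_const u
    have h2 : HasDerivAt (fun s : ℝ => (s + u) ^ 2) (2 * (x + u) ^ 1 * 1) x := h1.pow 2
    have h3 := h2.inv (by positivity)
    have h4 := (hasDerivAt_id x).mul h3
    refine h4.congr_deriv ?_
    simp only [Pi.inv_apply, id_eq]
    field_simp
    ring
  have hcont : IntervalIntegrable
      (fun s => ((s + u) ^ 2)⁻¹ - 2 * s * ((s + u) ^ 3)⁻¹) volume 1 σ :=
    intervalIntegrable_dmi hu hσ
  rw [intervalIntegral.integral_eq_sub_of_hasDerivAt hderiv hcont]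
  norm_num

lemma pointwise_F2_lower {σ : ℝ} (hσ : 1 ≤ σ) :
    (π ^ 2 / 6 - 1) * σ⁻¹ ≤ ∑' k : ℕ, ((σ + k + 1) ^ 2)⁻¹ := by
  have hσ0 : (0:ℝ) < σ := by linarith
  have hS2 : Summable (fun k : ℕ => ((σ + k + 1) ^ 2)⁻¹) := summable_inv_sq_shift hσ0.le
  have main : 0 ≤ σ * (∑' k : ℕ, ((σ + k + 1) ^ 2)⁻¹) - (π ^ 2 / 6 - 1) := by
    have hsplit : σ * (∑' k : ℕ, ((σ + k + 1) ^ 2)⁻¹) - (π ^ 2 / 6 - 1)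
        = ∑' k : ℕ, (σ * ((σ + k + 1) ^ 2)⁻¹ - (((k:ℝ) + 2) ^ 2)⁻¹) := by
      rw [← tsum_mul_left, ← basel_shift.tsum_eq,
        Summable.tsum_sub (hS2.mul_left σ) basel_shift.summable]
    rw [hsplit]
    have hterm : ∀ k : ℕ, σ * ((σ + k + 1) ^ 2)⁻¹ - (((k:ℝ) + 2) ^ 2)⁻¹
        = ∫ s in Set.Ioc (1:ℝ) σ,
            (((s + ((k:ℝ) + 1)) ^ 2)⁻¹ - 2 * s * ((s + ((k:ℝ) + 1)) ^ 3)⁻¹) := by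
      intro k
      rw [integral_deriv_mul_invsq (u := (k:ℝ) + 1) (by positivity) hσ]
      ring_nf
    simp_rw [hterm]
    have hInt : ∀ k : ℕ, Integrable
        (fun s => ((s + ((k:ℝ) + 1)) ^ 2)⁻¹ - 2 * s * ((s + ((k:ℝ) + 1)) ^ 3)⁻¹)
        (volume.restrict (Set.Ioc (1:ℝ) σ)) := by
      intro k
      rw [← IntegrableOn]
      exact (intervalIntegrable_iff_integrableOn_Ioc_of_le hσ).1
        (intervalIntegrable_dmi (by positivity) hσ)
    have hbound : ∀ k : ℕ, ∀ s ∈ Set.Ioc (1:ℝ) σ,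
        ‖((s + ((k:ℝ) + 1)) ^ 2)⁻¹ - 2 * s * ((s + ((k:ℝ) + 1)) ^ 3)⁻¹‖
          ≤ (1 + 2 * σ) * (((k:ℝ) + 2) ^ 2)⁻¹ := by
      intro k s hs
      have hs1 : 1 < s := hs.1
      have hsσ : s ≤ σ := hs.2
      have hp : (0:ℝ) < s + ((k:ℝ) + 1) := by positivity
      have hk2 : (0:ℝ) < (k:ℝ) + 2 := by positivity
      have hA : ((s + ((k:ℝ) + 1)) ^ 2)⁻¹ ≤ (((k:ℝ) + 2) ^ 2)⁻¹ := by
        apply inv_anti₀ (by positivity)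
        nlinarith
      have hB : 2 * s * ((s + ((k:ℝ) + 1)) ^ 3)⁻¹ ≤ 2 * σ * (((k:ℝ) + 2) ^ 2)⁻¹ := by
        apply mul_le_mul (by linarith) _ (by positivity) (by positivity)
        apply inv_anti₀ (by positivity)
        nlinarith
      have hBnn : 0 ≤ 2 * s * ((s + ((k:ℝ) + 1)) ^ 3)⁻¹ := by positivity
      have hAnn : 0 ≤ ((s + ((k:ℝ) + 1)) ^ 2)⁻¹ := by positivity
      rw [Real.norm_eq_abs]
      have := abs_sub_abs_le_abs_sub (((s + ((k:ℝ) + 1)) ^ 2)⁻¹) (2 * s * ((s + ((k:ℝ) + 1)) ^ 3)⁻¹)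
      calc |((s + ((k:ℝ) + 1)) ^ 2)⁻¹ - 2 * s * ((s + ((k:ℝ) + 1)) ^ 3)⁻¹|
          ≤ |((s + ((k:ℝ) + 1)) ^ 2)⁻¹| + |2 * s * ((s + ((k:ℝ) + 1)) ^ 3)⁻¹| := abs_sub _ _
        _ = ((s + ((k:ℝ) + 1)) ^ 2)⁻¹ + 2 * s * ((s + ((k:ℝ) + 1)) ^ 3)⁻¹ := by
            rw [abs_of_nonneg hAnn, abs_of_nonneg hBnn]
        _ ≤ (((k:ℝ) + 2) ^ 2)⁻¹ + 2 * σ * (((k:ℝ) + 2) ^ 2)⁻¹ := by linarith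
        _ = (1 + 2 * σ) * (((k:ℝ) + 2) ^ 2)⁻¹ := by ring
    have hSum : Summable (fun k : ℕ => ∫ s in Set.Ioc (1:ℝ) σ,
        ‖((s + ((k:ℝ) + 1)) ^ 2)⁻¹ - 2 * s * ((s + ((k:ℝ) + 1)) ^ 3)⁻¹‖) := by
      apply Summable.of_nonneg_of_le
        (fun k => integral_nonneg (fun s => norm_nonneg _))
        (fun k => ?_)
        (((basel_shift.summable.mul_left (1 + 2 * σ)).mul_left (σ - 1)))
      calc (∫ s in Set.Ioc (1:ℝ) σ,
            ‖((s + ((k:ℝ) + 1)) ^ 2)⁻¹ - 2 * s * ((s + ((k:ℝ) + 1)) ^ 3)⁻¹‖)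
          ≤ ∫ _ in Set.Ioc (1:ℝ) σ, (1 + 2 * σ) * (((k:ℝ) + 2) ^ 2)⁻¹ := by
            apply setIntegral_mono_on ((hInt k).norm) (integrableOn_const ?_)
              measurableSet_Ioc (hbound k)
            rw [Real.volume_Ioc]
            exact ENNReal.ofReal_ne_top
        _ = (σ - 1) * ((1 + 2 * σ) * (((k:ℝ) + 2) ^ 2)⁻¹) := by
            rw [setIntegral_const, Real.volume_real_Ioc_of_le (by linarith), smul_eq_mul]
    rw [integral_tsum_of_summable_integral_norm hInt hSum]
    apply setIntegral_nonneg measurableSet_Ioc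
    intro s hs
    have hs1 : (1:ℝ) < s := hs.1
    have hs0 : (0:ℝ) < s := by linarith
    have hsum2 : Summable (fun k : ℕ => ((s + k + 1) ^ 2)⁻¹) := summable_inv_sq_shift hs0.le
    have hsum3 : Summable (fun k : ℕ => ((s + k + 1) ^ 3)⁻¹) := summable_inv_cube_shift hs0.le
    have hrw : (fun k : ℕ => ((s + ((k:ℝ) + 1)) ^ 2)⁻¹ - 2 * s * ((s + ((k:ℝ) + 1)) ^ 3)⁻¹)
        = (fun k : ℕ => ((s + (k:ℝ) + 1) ^ 2)⁻¹ - 2 * s * ((s + (k:ℝ) + 1) ^ 3)⁻¹) := by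
      funext k; ring_nf
    rw [hrw, Summable.tsum_sub hsum2 (hsum3.mul_left (2 * s)), tsum_mul_left]
    have h2 := tsum_inv_sq_lower hs0
    have h3 := tsum_inv_cube_upper hs0
    have halg : s * ((s + 1/2) ^ 2)⁻¹ ≤ (s + 1)⁻¹ := by
      rw [← div_eq_mul_inv, ← one_div, div_le_div_iff₀ (by positivity) (by positivity)]
      nlinarith
    have : 2 * s * (∑' k : ℕ, ((s + k + 1) ^ 3)⁻¹) ≤ 2 * s * ((1/2) * ((s + 1/2) ^ 2)⁻¹) :=
      mul_le_mul_of_nonneg_left h3 (by positivity)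
    nlinarith
  have h2 : (π ^ 2 / 6 - 1) ≤ σ * (∑' k : ℕ, ((σ + k + 1) ^ 2)⁻¹) := by linarith
  calc (π ^ 2 / 6 - 1) * σ⁻¹ ≤ (σ * (∑' k : ℕ, ((σ + k + 1) ^ 2)⁻¹)) * σ⁻¹ :=
        mul_le_mul_of_nonneg_right h2 (by positivity)
    _ = ∑' k : ℕ, ((σ + k + 1) ^ 2)⁻¹ := by
        field_simp

lemma integral_inv_mul {u t : ℝ} (hu : 0 ≤ u) (ht : 1 ≤ t) :
    ∫ s in Set.Ioc (1:ℝ) t, ((s + u) * (s + u + 1))⁻¹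
      = (log (t + u) - log (t + u + 1)) - (log (1 + u) - log (2 + u)) := by
  have hpos : ∀ x ∈ Set.uIcc (1:ℝ) t, 0 < x + u := by
    intro x hx
    rw [Set.uIcc_of_le ht] at hx
    linarith [hx.1]
  rw [← intervalIntegral.integral_of_le ht]
  have hderiv : ∀ x ∈ Set.uIcc (1:ℝ) t,
      HasDerivAt (fun s => log (s + u) - log (s + u + 1)) (((x + u) * (x + u + 1))⁻¹) x := by
    intro x hx
    have hx0 : 0 < x + u := hpos x hx
    have h1 : HasDerivAt (fun s : ℝ => s + u) 1 x := (hasDerivAt_id x).add_const u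
    have h2 : HasDerivAt (fun s : ℝ => s + u + 1) 1 x := h1.add_const 1
    have h3 := (h1.log hx0.ne').sub (h2.log (by linarith))
    refine h3.congr_deriv ?_
    have hne1 : x + u + 1 ≠ 0 := by linarith
    field_simp
    ring
  have hcont : IntervalIntegrable (fun s => ((s + u) * (s + u + 1))⁻¹) volume 1 t := by
    apply ContinuousOn.intervalIntegrable
    apply ContinuousOn.inv₀ (by fun_prop)
    intro x hx
    have := hpos x hx
    exact ne_of_gt (by nlinarith)
  rw [intervalIntegral.integral_eq_sub_of_hasDerivAt hderiv hcont]
  have : (1:ℝ) + u + 1 = 2 + u := by ring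
  rw [this]

lemma Ck_le {t : ℝ} (ht : 1 ≤ t) (k : ℕ) :
    ((k:ℝ) + 2)⁻¹ - (t + (k:ℝ) + 1)⁻¹
      ≤ (log ((k:ℝ) + 2) - log ((k:ℝ) + 1)) + (log (t + (k:ℝ)) - log (t + (k:ℝ) + 1)) := by
  have h1 := integral_inv_sq (u := (k:ℝ) + 1) (by positivity) ht
  have h2 := integral_inv_mul (u := (k:ℝ)) (by positivity) ht
  have hle : (∫ s in Set.Ioc (1:ℝ) t, ((s + ((k:ℝ) + 1)) ^ 2)⁻¹)
      ≤ ∫ s in Set.Ioc (1:ℝ) t, ((s + (k:ℝ)) * (s + (k:ℝ) + 1))⁻¹ := by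
    apply setIntegral_mono_on
    · refine (intervalIntegrable_iff_integrableOn_Ioc_of_le ht).1 ?_
      apply ContinuousOn.intervalIntegrable
      apply ContinuousOn.inv₀ (by fun_prop)
      intro x hx
      rw [Set.uIcc_of_le ht] at hx
      have : (0:ℝ) < x + ((k:ℝ) + 1) := by
        have := hx.1; positivity
      exact ne_of_gt (pow_pos this _)
    · refine (intervalIntegrable_iff_integrableOn_Ioc_of_le ht).1 ?_
      apply ContinuousOn.intervalIntegrable
      apply ContinuousOn.inv₀ (by fun_prop)
      intro x hx
      rw [Set.uIcc_of_le ht] at hx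
      have hx1 : (1:ℝ) ≤ x := hx.1
      have h3 : (0:ℝ) < x + (k:ℝ) := by positivity
      exact ne_of_gt (by nlinarith)
    · exact measurableSet_Ioc
    · intro s hs
      have hs1 : (1:ℝ) < s := hs.1
      have h3 : (0:ℝ) < s + (k:ℝ) := by positivity
      apply inv_anti₀ (by nlinarith)
      nlinarith
  rw [h1, h2] at hle
  have e1 : (1 + ((k:ℝ) + 1))⁻¹ = ((k:ℝ) + 2)⁻¹ := by ring_nf
  have e2 : (t + ((k:ℝ) + 1))⁻¹ = (t + (k:ℝ) + 1)⁻¹ := by ring_nf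
  rw [e1, e2] at hle
  have e3 : log (2 + (k:ℝ)) = log ((k:ℝ) + 2) := by rw [add_comm]
  have e4 : log (1 + (k:ℝ)) = log ((k:ℝ) + 1) := by rw [add_comm]
  rw [e3, e4] at hle
  linarith

lemma upper_T {t : ℝ} (ht : 1 ≤ t) :
    ∑' k : ℕ, (((k:ℝ) + 1)⁻¹ - (t + (k:ℝ) + 1)⁻¹) ≤ 1 + log t := by
  have hBnn : ∀ k : ℕ, 0 ≤ ((k:ℝ) + 1)⁻¹ - (t + (k:ℝ) + 1)⁻¹ := by
    intro k
    have : ((k:ℝ) + 1) ≤ t + (k:ℝ) + 1 := by linarith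
    have h1 : (0:ℝ) < (k:ℝ) + 1 := by positivity
    have := inv_anti₀ h1 this
    linarith
  apply Real.tsum_le_of_sum_range_le hBnn
  intro n
  -- termwise bound
  have hterm : ∀ k : ℕ, ((k:ℝ) + 1)⁻¹ - (t + (k:ℝ) + 1)⁻¹
      ≤ (((k:ℝ) + 1)⁻¹ - (((k:ℝ) + 1) + 1)⁻¹)
        + ((log (((k:ℝ) + 1) + 1) - log ((k:ℝ) + 1))
        + (log (t + (k:ℝ)) - log (t + ((k:ℝ) + 1)))) := by
    intro k
    have := Ck_le ht k
    have e : ((k:ℝ) + 1) + 1 = (k:ℝ) + 2 := by ring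
    rw [e]
    have e2 : t + ((k:ℝ) + 1) = t + (k:ℝ) + 1 := by ring
    rw [e2]
    linarith
  calc ∑ k ∈ Finset.range n, (((k:ℝ) + 1)⁻¹ - (t + (k:ℝ) + 1)⁻¹)
      ≤ ∑ k ∈ Finset.range n, ((((k:ℝ) + 1)⁻¹ - (((k:ℝ) + 1) + 1)⁻¹)
        + ((log (((k:ℝ) + 1) + 1) - log ((k:ℝ) + 1))
        + (log (t + (k:ℝ)) - log (t + ((k:ℝ) + 1))))) :=
        Finset.sum_le_sum (fun k _ => hterm k)
    _ ≤ 1 + log t := by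
        have key : ∀ k : ℕ, ((((k:ℝ) + 1)⁻¹ - (((k:ℝ) + 1) + 1)⁻¹)
            + ((log (((k:ℝ) + 1) + 1) - log ((k:ℝ) + 1))
            + (log (t + (k:ℝ)) - log (t + ((k:ℝ) + 1)))))
            = (fun j : ℕ => ((j:ℝ) + 1)⁻¹ - log ((j:ℝ) + 1) + log (t + (j:ℝ))) k
              - (fun j : ℕ => ((j:ℝ) + 1)⁻¹ - log ((j:ℝ) + 1) + log (t + (j:ℝ))) (k + 1) := by
          intro k
          simp only []
          push_cast
          ring
        rw [Finset.sum_congr rfl (fun k _ => key k), Finset.sum_range_sub']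
        simp only [Nat.cast_zero, Real.log_one]
        have h1 : (0:ℝ) ≤ ((n:ℝ) + 1)⁻¹ := by positivity
        have h2 : log ((n:ℝ) + 1) ≤ log (t + (n:ℝ)) := by
          apply Real.log_le_log (by positivity)
          linarith
        norm_num
        linarith

lemma summable_C {t : ℝ} (ht : 1 ≤ t) :
    Summable (fun k : ℕ => ((k:ℝ) + 2)⁻¹ - (t + (k:ℝ) + 1)⁻¹) := by
  apply Summable.of_nonneg_of_le _ _ (basel_shift.summable.mul_left (t - 1))
  · intro k
    have h1 : (0:ℝ) < (k:ℝ) + 2 := by positivity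
    have := inv_anti₀ h1 (by linarith : ((k:ℝ) + 2) ≤ t + (k:ℝ) + 1)
    linarith
  · intro k
    have h1 : (0:ℝ) < (k:ℝ) + 2 := by positivity
    have h2 : (0:ℝ) < t + (k:ℝ) + 1 := by linarith
    rw [inv_sub_inv h1.ne' h2.ne']
    have e : t + (k:ℝ) + 1 - ((k:ℝ) + 2) = t - 1 := by ring
    rw [e, ← div_eq_mul_inv]
    apply div_le_div_of_nonneg_left (by linarith) (by positivity)
    nlinarith

lemma sum_tel_one : HasSum (fun k : ℕ => ((k:ℝ) + 1)⁻¹ - ((k:ℝ) + 2)⁻¹) 1 := by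
  have := hasSum_telescope (g := fun k : ℕ => ((k:ℝ) + 1)⁻¹) ?_ ?_
  · have h0 : ((0:ℕ):ℝ) + 1 = 1 := by norm_num
    convert this using 2 with k
    · push_cast; ring_nf
    · norm_num
  · simpa using tendsto_inv_shift 0 1
  · intro n
    apply inv_anti₀ (by positivity)
    push_cast; linarith

lemma integral_inv_Ioc {t : ℝ} (ht : 1 ≤ t) : ∫ s in Set.Ioc (1:ℝ) t, s⁻¹ = log t := by
  rw [← intervalIntegral.integral_of_le ht, integral_inv]
  · simp
  · rw [Set.uIcc_of_le ht]
    intro h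
    linarith [h.1]

lemma lower_T {t : ℝ} (ht : 1 ≤ t) :
    1 + (π ^ 2 / 6 - 1) * log t ≤ ∑' k : ℕ, (((k:ℝ) + 1)⁻¹ - (t + (k:ℝ) + 1)⁻¹) := by
  have hsplit : (fun k : ℕ => ((k:ℝ) + 1)⁻¹ - (t + (k:ℝ) + 1)⁻¹)
      = fun k : ℕ => (((k:ℝ) + 1)⁻¹ - ((k:ℝ) + 2)⁻¹) + (((k:ℝ) + 2)⁻¹ - (t + (k:ℝ) + 1)⁻¹) := by
    funext k; ring
  rw [hsplit, Summable.tsum_add sum_tel_one.summable (summable_C ht), sum_tel_one.tsum_eq]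
  have hmain : (π ^ 2 / 6 - 1) * log t ≤ ∑' k : ℕ, (((k:ℝ) + 2)⁻¹ - (t + (k:ℝ) + 1)⁻¹) := by
    have hBsum : HasSum (fun k : ℕ => (((k:ℝ) + 2) ^ 2)⁻¹ * log t) ((π ^ 2 / 6 - 1) * log t) :=
      basel_shift.mul_right (log t)
    have hdiff : (∑' k : ℕ, (((k:ℝ) + 2)⁻¹ - (t + (k:ℝ) + 1)⁻¹)) - (π ^ 2 / 6 - 1) * log t
        = ∑' k : ℕ, ((((k:ℝ) + 2)⁻¹ - (t + (k:ℝ) + 1)⁻¹) - (((k:ℝ) + 2) ^ 2)⁻¹ * log t) := by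
      rw [Summable.tsum_sub (summable_C ht) hBsum.summable, hBsum.tsum_eq]
    have hterm : ∀ k : ℕ, (((k:ℝ) + 2)⁻¹ - (t + (k:ℝ) + 1)⁻¹) - (((k:ℝ) + 2) ^ 2)⁻¹ * log t
        = ∫ s in Set.Ioc (1:ℝ) t,
            (((s + ((k:ℝ) + 1)) ^ 2)⁻¹ - (((k:ℝ) + 2) ^ 2)⁻¹ * s⁻¹) := by
      intro k
      have hint1 : IntegrableOn (fun s => ((s + ((k:ℝ) + 1)) ^ 2)⁻¹) (Set.Ioc (1:ℝ) t) := by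
        refine (intervalIntegrable_iff_integrableOn_Ioc_of_le ht).1 ?_
        apply ContinuousOn.intervalIntegrable
        apply ContinuousOn.inv₀ (by fun_prop)
        intro x hx
        rw [Set.uIcc_of_le ht] at hx
        have : (0:ℝ) < x + ((k:ℝ) + 1) := by have := hx.1; positivity
        exact ne_of_gt (pow_pos this _)
      have hint2 : IntegrableOn (fun s => (((k:ℝ) + 2) ^ 2)⁻¹ * s⁻¹) (Set.Ioc (1:ℝ) t) := by
        refine (intervalIntegrable_iff_integrableOn_Ioc_of_le ht).1 ?_
        apply ContinuousOn.intervalIntegrable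
        apply ContinuousOn.mul continuousOn_const
        apply ContinuousOn.inv₀ continuous_id.continuousOn
        intro x hx
        rw [Set.uIcc_of_le ht] at hx
        simp only [id_eq]
        exact ne_of_gt (by linarith [hx.1])
      rw [integral_sub hint1 hint2, integral_inv_sq (by positivity) ht, integral_const_mul,
        integral_inv_Ioc ht]
      have e1 : (1 + ((k:ℝ) + 1))⁻¹ = ((k:ℝ) + 2)⁻¹ := by ring_nf
      have e2 : (t + ((k:ℝ) + 1))⁻¹ = (t + (k:ℝ) + 1)⁻¹ := by ring_nf
      rw [e1, e2]
    have hge : 0 ≤ (∑' k : ℕ, (((k:ℝ) + 2)⁻¹ - (t + (k:ℝ) + 1)⁻¹)) - (π ^ 2 / 6 - 1) * log t := by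
      rw [hdiff]
      simp_rw [hterm]
      have hInt : ∀ k : ℕ, Integrable
          (fun s => ((s + ((k:ℝ) + 1)) ^ 2)⁻¹ - (((k:ℝ) + 2) ^ 2)⁻¹ * s⁻¹)
          (volume.restrict (Set.Ioc (1:ℝ) t)) := by
        intro k
        have hint1 : IntegrableOn (fun s => ((s + ((k:ℝ) + 1)) ^ 2)⁻¹) (Set.Ioc (1:ℝ) t) := by
          refine (intervalIntegrable_iff_integrableOn_Ioc_of_le ht).1 ?_
          apply ContinuousOn.intervalIntegrable
          apply ContinuousOn.inv₀ (by fun_prop)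
          intro x hx
          rw [Set.uIcc_of_le ht] at hx
          have : (0:ℝ) < x + ((k:ℝ) + 1) := by have := hx.1; positivity
          exact ne_of_gt (pow_pos this _)
        have hint2 : IntegrableOn (fun s => (((k:ℝ) + 2) ^ 2)⁻¹ * s⁻¹) (Set.Ioc (1:ℝ) t) := by
          refine (intervalIntegrable_iff_integrableOn_Ioc_of_le ht).1 ?_
          apply ContinuousOn.intervalIntegrable
          apply ContinuousOn.mul continuousOn_const
          apply ContinuousOn.inv₀ continuous_id.continuousOn
          intro x hx
          rw [Set.uIcc_of_le ht] at hx
          simp only [id_eq]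
          exact ne_of_gt (by linarith [hx.1])
        exact hint1.sub hint2
      have hbound : ∀ k : ℕ, ∀ s ∈ Set.Ioc (1:ℝ) t,
          ‖((s + ((k:ℝ) + 1)) ^ 2)⁻¹ - (((k:ℝ) + 2) ^ 2)⁻¹ * s⁻¹‖
            ≤ 2 * (((k:ℝ) + 2) ^ 2)⁻¹ := by
        intro k s hs
        have hs1 : (1:ℝ) < s := hs.1
        have hk2 : (0:ℝ) < (k:ℝ) + 2 := by positivity
        have hA : ((s + ((k:ℝ) + 1)) ^ 2)⁻¹ ≤ (((k:ℝ) + 2) ^ 2)⁻¹ := by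
          apply inv_anti₀ (by positivity)
          nlinarith
        have hAnn : (0:ℝ) ≤ ((s + ((k:ℝ) + 1)) ^ 2)⁻¹ := by positivity
        have hB : (((k:ℝ) + 2) ^ 2)⁻¹ * s⁻¹ ≤ (((k:ℝ) + 2) ^ 2)⁻¹ := by
          have hsinv : s⁻¹ ≤ 1 := by
            rw [inv_le_one_iff₀]; right; linarith
          nlinarith [inv_nonneg.2 (le_of_lt (lt_trans one_pos hs1))]
        have hBnn : (0:ℝ) ≤ (((k:ℝ) + 2) ^ 2)⁻¹ * s⁻¹ := by positivity
        rw [Real.norm_eq_abs]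
        rw [abs_le]
        constructor <;> nlinarith
      have hSum : Summable (fun k : ℕ => ∫ s in Set.Ioc (1:ℝ) t,
          ‖((s + ((k:ℝ) + 1)) ^ 2)⁻¹ - (((k:ℝ) + 2) ^ 2)⁻¹ * s⁻¹‖) := by
        apply Summable.of_nonneg_of_le
          (fun k => integral_nonneg (fun s => norm_nonneg _))
          (fun k => ?_)
          (((basel_shift.summable.mul_left 2).mul_left (t - 1)))
        calc (∫ s in Set.Ioc (1:ℝ) t,
              ‖((s + ((k:ℝ) + 1)) ^ 2)⁻¹ - (((k:ℝ) + 2) ^ 2)⁻¹ * s⁻¹‖)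
            ≤ ∫ _ in Set.Ioc (1:ℝ) t, 2 * (((k:ℝ) + 2) ^ 2)⁻¹ := by
              apply setIntegral_mono_on ((hInt k).norm) (integrableOn_const ?_)
                measurableSet_Ioc (hbound k)
              rw [Real.volume_Ioc]
              exact ENNReal.ofReal_ne_top
          _ = (t - 1) * (2 * (((k:ℝ) + 2) ^ 2)⁻¹) := by
              rw [setIntegral_const, Real.volume_real_Ioc_of_le (by linarith), smul_eq_mul]
      rw [integral_tsum_of_summable_integral_norm hInt hSum]
      apply setIntegral_nonneg measurableSet_Ioc
      intro s hs
      have hs1 : (1:ℝ) ≤ s := hs.1.le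
      have hs0 : (0:ℝ) < s := by linarith
      have hsum2 : Summable (fun k : ℕ => ((s + (k:ℝ) + 1) ^ 2)⁻¹) := summable_inv_sq_shift hs0.le
      have hBsum2 : HasSum (fun k : ℕ => (((k:ℝ) + 2) ^ 2)⁻¹ * s⁻¹) ((π ^ 2 / 6 - 1) * s⁻¹) :=
        basel_shift.mul_right s⁻¹
      have hrw : (fun k : ℕ => ((s + ((k:ℝ) + 1)) ^ 2)⁻¹ - (((k:ℝ) + 2) ^ 2)⁻¹ * s⁻¹)
          = fun k : ℕ => ((s + (k:ℝ) + 1) ^ 2)⁻¹ - (((k:ℝ) + 2) ^ 2)⁻¹ * s⁻¹ := by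
        funext k; ring_nf
      rw [hrw, Summable.tsum_sub hsum2 hBsum2.summable, hBsum2.tsum_eq, sub_nonneg]
      exact le_trans (le_of_eq rfl) (pointwise_F2_lower hs1)
    linarith
  linarith

lemma integral_rpow_Ioo {p : ℝ} (hp : 0 ≤ p) :
    ∫ r in Set.Ioo (0:ℝ) 1, r ^ p = (p + 1)⁻¹ := by
  rw [← integral_Ioc_eq_integral_Ioo, ← intervalIntegral.integral_of_le zero_le_one,
    integral_rpow (Or.inl (by linarith))]
  rw [Real.one_rpow, Real.zero_rpow (by positivity : p + 1 ≠ 0)]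
  rw [sub_zero, one_div]

lemma integrable_rpow_Ioo {p : ℝ} (hp : 0 ≤ p) :
    Integrable (fun r : ℝ => r ^ p) (volume.restrict (Set.Ioo (0:ℝ) 1)) := by
  have h := intervalIntegral.intervalIntegrable_rpow' (a := 0) (b := 1) (r := p)
    (by linarith : (-1:ℝ) < p)
  exact ((intervalIntegrable_iff_integrableOn_Ioc_of_le zero_le_one).1 h).mono_set
    Set.Ioo_subset_Ioc_self

lemma integral_eq_S {t : ℝ} (ht : 1 ≤ t) :
    ∫ r in Set.Ioo (0:ℝ) 1, r ^ (t - 1) * (-log (1 - r))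
      = ∑' k : ℕ, (((k:ℝ) + 1) * (t + (k:ℝ) + 1))⁻¹ := by
  have hcong : Set.EqOn (fun r : ℝ => r ^ (t - 1) * (-log (1 - r)))
      (fun r : ℝ => ∑' k : ℕ, r ^ (t + (k:ℝ)) / ((k:ℝ) + 1)) (Set.Ioo 0 1) := by
    intro r hr
    have hr0 : (0:ℝ) < r := hr.1
    have hr1 : r < 1 := hr.2
    have habs : |r| < 1 := by rw [abs_of_pos hr0]; exact hr1
    have hs := (hasSum_pow_div_log_of_abs_lt_one habs).mul_left (r ^ (t - 1))
    have hs2 : HasSum (fun k : ℕ => r ^ (t + (k:ℝ)) / ((k:ℝ) + 1))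
        (r ^ (t - 1) * (-log (1 - r))) := by
      convert hs using 2 with k
      · rfl
      symm
      rw [← mul_div_assoc]
      congr 1
      rw [← Real.rpow_natCast r (k + 1), ← Real.rpow_add hr0]
      congr 1
      push_cast
      ring
    exact hs2.tsum_eq.symm
  rw [setIntegral_congr_fun measurableSet_Ioo hcong]
  have hval : ∀ k : ℕ, ∫ r in Set.Ioo (0:ℝ) 1, r ^ (t + (k:ℝ)) / ((k:ℝ) + 1)
      = (((k:ℝ) + 1) * (t + (k:ℝ) + 1))⁻¹ := by
    intro k
    rw [integral_div, integral_rpow_Ioo (by positivity)]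
    rw [mul_inv, div_eq_mul_inv, mul_comm]
  have hInt : ∀ k : ℕ, Integrable (fun r : ℝ => r ^ (t + (k:ℝ)) / ((k:ℝ) + 1))
      (volume.restrict (Set.Ioo (0:ℝ) 1)) :=
    fun k => (integrable_rpow_Ioo (by positivity)).div_const _
  have hnorm : ∀ k : ℕ, (∫ r in Set.Ioo (0:ℝ) 1, ‖r ^ (t + (k:ℝ)) / ((k:ℝ) + 1)‖)
      = (((k:ℝ) + 1) * (t + (k:ℝ) + 1))⁻¹ := by
    intro k
    rw [← hval k]
    apply setIntegral_congr_fun measurableSet_Ioo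
    intro r hr
    have hr0 : (0:ℝ) < r := hr.1
    have : (0:ℝ) ≤ r ^ (t + (k:ℝ)) / ((k:ℝ) + 1) := by positivity
    simp only [Real.norm_eq_abs, abs_of_nonneg this]
  have hSum : Summable (fun k : ℕ => ∫ r in Set.Ioo (0:ℝ) 1, ‖r ^ (t + (k:ℝ)) / ((k:ℝ) + 1)‖) := by
    simp_rw [hnorm]
    have hbase : Summable (fun k : ℕ => (((k:ℝ) + 1) ^ 2)⁻¹) := by
      have := summable_inv_sq_shift (s := 0) le_rfl
      simpa using this
    apply hbase.of_nonneg_of_le (fun k => by positivity)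
    intro k
    apply inv_anti₀ (by positivity)
    nlinarith [Nat.cast_nonneg (α := ℝ) k]
  rw [← integral_tsum_of_summable_integral_norm hInt hSum]
  exact tsum_congr hval

lemma I_bounds {t : ℝ} (ht : 1 ≤ t) :
    t⁻¹ * (1 + (π ^ 2 / 6 - 1) * log t)
      ≤ (∫ r in Set.Ioo (0:ℝ) 1, r ^ (t - 1) * (-log (1 - r)))
    ∧ (∫ r in Set.Ioo (0:ℝ) 1, r ^ (t - 1) * (-log (1 - r))) ≤ t⁻¹ * (1 + log t) := by
  have ht0 : (0:ℝ) < t := by linarith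
  have hone : ∀ k : ℕ, ((k:ℝ) + 1)⁻¹ - (t + (k:ℝ) + 1)⁻¹
      = t * ((((k:ℝ) + 1) * (t + (k:ℝ) + 1))⁻¹) := by
    intro k
    have h1 : (0:ℝ) < (k:ℝ) + 1 := by positivity
    have h2 : (0:ℝ) < t + (k:ℝ) + 1 := by linarith
    rw [inv_sub_inv h1.ne' h2.ne']
    rw [show t + (k:ℝ) + 1 - ((k:ℝ) + 1) = t by ring, div_eq_mul_inv]
  have hT : ∑' k : ℕ, (((k:ℝ) + 1)⁻¹ - (t + (k:ℝ) + 1)⁻¹)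
      = t * ∑' k : ℕ, ((((k:ℝ) + 1) * (t + (k:ℝ) + 1))⁻¹) := by
    rw [tsum_congr hone, tsum_mul_left]
  have hS : (∫ r in Set.Ioo (0:ℝ) 1, r ^ (t - 1) * (-log (1 - r)))
      = t⁻¹ * ∑' k : ℕ, (((k:ℝ) + 1)⁻¹ - (t + (k:ℝ) + 1)⁻¹) := by
    rw [integral_eq_S ht, hT, ← mul_assoc, inv_mul_cancel₀ ht0.ne', one_mul]
  constructor
  · rw [hS]
    exact mul_le_mul_of_nonneg_left (lower_T ht) (by positivity)
  · rw [hS]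
    exact mul_le_mul_of_nonneg_left (upper_T ht) (by positivity)

lemma neg_log_le {y : ℝ} (hy0 : 0 < y) : -log y ≤ 2 * y ^ (-(1/2) : ℝ) := by
  have hz : (0:ℝ) < y ^ ((1/2) : ℝ) := Real.rpow_pos_of_pos hy0 _
  have h1 : log ((y ^ ((1/2) : ℝ))⁻¹) ≤ (y ^ ((1/2) : ℝ))⁻¹ - 1 :=
    Real.log_le_sub_one_of_pos (by positivity)
  rw [Real.log_inv, Real.log_rpow hy0] at h1
  have h2 : y ^ (-(1/2) : ℝ) = (y ^ ((1/2) : ℝ))⁻¹ := by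
    rw [← Real.rpow_neg hy0.le]
  rw [h2]
  nlinarith

lemma integrable_term {t : ℝ} (ht : 1 ≤ t) :
    Integrable (fun r : ℝ => r ^ (t - 1) * (-log (1 - r)))
      (volume.restrict (Set.Ioo (0:ℝ) 1)) := by
  have hg : Integrable (fun r : ℝ => 2 * (1 - r) ^ (-(1/2) : ℝ))
      (volume.restrict (Set.Ioo (0:ℝ) 1)) := by
    have h := intervalIntegral.intervalIntegrable_rpow' (a := 0) (b := 1) (r := (-(1/2) : ℝ))
      (by norm_num)
    have h2 := (h.comp_sub_left 1).symm
    norm_num at h2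
    have h3 := h2.const_mul 2
    exact (((intervalIntegrable_iff_integrableOn_Ioc_of_le zero_le_one).1 h3).mono_set
      Set.Ioo_subset_Ioc_self)
  have hmeas : AEStronglyMeasurable (fun r : ℝ => r ^ (t - 1) * (-log (1 - r)))
      (volume.restrict (Set.Ioo (0:ℝ) 1)) := by
    apply Measurable.aestronglyMeasurable
    apply Measurable.mul
    · exact (Real.continuous_rpow_const (by linarith : (0:ℝ) ≤ t - 1)).measurable
    · exact (Real.measurable_log.comp (measurable_const.sub measurable_id)).neg
  apply hg.mono hmeas
  rw [ae_restrict_iff' measurableSet_Ioo]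
  apply ae_of_all
  intro r hr
  have hr0 : (0:ℝ) < r := hr.1
  have hr1 : r < 1 := hr.2
  have hy0 : (0:ℝ) < 1 - r := by linarith
  have hrp : (0:ℝ) < r ^ (t - 1) := Real.rpow_pos_of_pos hr0 _
  have hlog : 0 ≤ -log (1 - r) := by
    have := Real.log_nonpos (by linarith) (by linarith : 1 - r ≤ 1)
    linarith
  have hfnn : 0 ≤ r ^ (t - 1) * (-log (1 - r)) := mul_nonneg hrp.le hlog
  have hb1 : r ^ (t - 1) ≤ 1 := Real.rpow_le_one hr0.le hr1.le (by linarith)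
  have hgpos : 0 ≤ 2 * (1 - r) ^ (-(1/2) : ℝ) := by positivity
  rw [Real.norm_eq_abs, Real.norm_eq_abs, abs_of_nonneg hfnn, abs_of_nonneg hgpos]
  calc r ^ (t - 1) * (-log (1 - r)) ≤ 1 * (-log (1 - r)) :=
        mul_le_mul_of_nonneg_right hb1 hlog
    _ = -log (1 - r) := one_mul _
    _ ≤ 2 * (1 - r) ^ (-(1/2) : ℝ) := neg_log_le hy0

/-- Bounds on the expectation of the Aaronson score `−log(1−Y)` under the Gumbel-max
alternative `μ_{1,P}` (with density `f_{1,P}(r) = ∑_w r^{1/P_w − 1}` on `(0,1)`):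
`1 + (π²/6 − 1)·Ent(P) ≤ E_{1,P}[−log(1−Y)] ≤ 1 + Ent(P)`, where
`Ent(P) = −∑_w P_w log P_w`. -/
theorem aaronson_score_expectation_bounds {W : Type*} [Fintype W]
    (P : W → ℝ) (hpos : ∀ w, 0 < P w) (hsum : ∑ w, P w = 1) :
    1 + (Real.pi ^ 2 / 6 - 1) * (-∑ w, P w * Real.log (P w))
      ≤ (∫ r in Set.Ioo (0:ℝ) 1, (∑ w, r ^ (1 / P w - 1)) * (-Real.log (1 - r))) ∧
    (∫ r in Set.Ioo (0:ℝ) 1, (∑ w, r ^ (1 / P w - 1)) * (-Real.log (1 - r)))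
      ≤ 1 + (-∑ w, P w * Real.log (P w)) := by
  have hP1 : ∀ w, P w ≤ 1 := by
    intro w
    rw [← hsum]
    exact Finset.single_le_sum (fun w _ => (hpos w).le) (Finset.mem_univ w)
  have htw : ∀ w : W, 1 ≤ (P w)⁻¹ := by
    intro w
    rw [← one_div, le_div_iff₀ (hpos w)]
    linarith [hP1 w]
  -- rewrite integrand as finite sum
  have hint_eq : (∫ r in Set.Ioo (0:ℝ) 1, (∑ w, r ^ (1 / P w - 1)) * (-Real.log (1 - r)))
      = ∑ w, ∫ r in Set.Ioo (0:ℝ) 1, r ^ ((P w)⁻¹ - 1) * (-Real.log (1 - r)) := by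
    rw [← integral_finset_sum _ (fun w _ => integrable_term (htw w))]
    apply setIntegral_congr_fun measurableSet_Ioo
    intro r _
    simp only [one_div]
    rw [Finset.sum_mul]
  rw [hint_eq]
  have hlog : ∀ w, Real.log ((P w)⁻¹) = -Real.log (P w) := fun w => Real.log_inv (P w)
  have key : ∀ (c : ℝ), ∑ w, (P w * (1 + c * (-Real.log (P w))))
      = 1 + c * (-∑ w, P w * Real.log (P w)) := by
    intro c
    have hterm : ∀ w : W, P w * (1 + c * (-Real.log (P w)))
        = P w + c * (-(P w * Real.log (P w))) := fun w => by ring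
    rw [Finset.sum_congr rfl (fun w _ => hterm w), Finset.sum_add_distrib, hsum,
      ← Finset.mul_sum]
    congr 1
    rw [Finset.sum_neg_distrib]
  constructor
  · calc 1 + (π ^ 2 / 6 - 1) * (-∑ w, P w * Real.log (P w))
        = ∑ w, (P w * (1 + (π ^ 2 / 6 - 1) * (-Real.log (P w)))) := (key _).symm
      _ ≤ ∑ w, ∫ r in Set.Ioo (0:ℝ) 1, r ^ ((P w)⁻¹ - 1) * (-Real.log (1 - r)) := by
          apply Finset.sum_le_sum
          intro w _
          have h := (I_bounds (htw w)).1
          rw [inv_inv, hlog w] at h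
          exact h
  · calc ∑ w, ∫ r in Set.Ioo (0:ℝ) 1, r ^ ((P w)⁻¹ - 1) * (-Real.log (1 - r))
        ≤ ∑ w, (P w * (1 + 1 * (-Real.log (P w)))) := by
          apply Finset.sum_le_sum
          intro w _
          have h := (I_bounds (htw w)).2
          rw [inv_inv, hlog w] at h
          rw [one_mul]
          exact h
      _ = 1 + (-∑ w, P w * Real.log (P w)) := by
          rw [key 1, one_mul]
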